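/- arXiv:2404.06891 — 2 statements merged into one kernel-verified Lean document; each statement's English description precedes it below -/
import Mathlib

section
/- For a normalized, monotone, submodular function f on a finite ground set E and cardinality constraint k, the greedy algorithm that iteratively adds the element with largest marginal gain produces, after k steps, a set S_G with f(S_G) ≥ (1 - (1 - 1/k)^k) · max_{|S| ≤ k} f(S) ≥ (1 - e^{-1}) · max_{|S| ≤ k} f(S). -/
/-- The greedy algorithm achieves a `(1 - (1 - 1/k)^k) ≥ (1 - e⁻¹)` approximation for
cardinality-constrained maximization of a normalized monotone submodular function. -/
theorem greedy_submodular_approximation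
    {E : Type*} [Fintype E] [DecidableEq E] (f : Finset E → ℝ)
    (k : ℕ) (hk : 0 < k) (hkE : k ≤ Fintype.card E)
    (hf0 : f ∅ = 0)
    (hmono : ∀ A B : Finset E, A ⊆ B → f A ≤ f B)
    (hsub : ∀ A B : Finset E, f A + f B ≥ f (A ∪ B) + f (A ∩ B))
    (S : ℕ → Finset E) (hS0 : S 0 = ∅)
    (hgreedy : ∀ i < k, ∃ e ∉ S i, S (i + 1) = insert e (S i) ∧
      ∀ e' ∉ S i, f (insert e' (S i)) ≤ f (insert e (S i)))
    (Sopt : Finset E) (hcard : Sopt.card ≤ k)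
    (hopt : ∀ T : Finset E, T.card ≤ k → f T ≤ f Sopt) :
    f (S k) ≥ (1 - (1 - 1 / (k : ℝ)) ^ k) * f Sopt ∧
    (1 - (1 - 1 / (k : ℝ)) ^ k) * f Sopt ≥ (1 - Real.exp (-1)) * f Sopt := by
  have hkpos : (0:ℝ) < k := by exact_mod_cast hk
  have hk1 : (1:ℝ) ≤ k := by exact_mod_cast hk
  have hc0 : (0:ℝ) ≤ 1 - 1/(k:ℝ) := by
    have : 1/(k:ℝ) ≤ 1 := by
      rw [div_le_one hkpos]; exact hk1
    linarith
  -- key submodularity lemma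
  have key : ∀ (A T : Finset E),
      f (A ∪ T) ≤ f A + ∑ e ∈ T \ A, (f (insert e A) - f A) := by
    intro A T
    induction T using Finset.induction_on with
    | empty => simp
    | @insert a T haT ih =>
      by_cases haA : a ∈ A
      · have h1 : A ∪ insert a T = A ∪ T := by
          rw [Finset.union_insert, Finset.insert_eq_self]
          exact Finset.mem_union_left _ haA
        have h2 : (insert a T) \ A = T \ A := by
          ext x; simp only [Finset.mem_sdiff, Finset.mem_insert]
          constructor
          · rintro ⟨h | h, hx⟩
            · exact absurd (h ▸ haA) hx
            · exact ⟨h, hx⟩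
          · rintro ⟨h, hx⟩; exact ⟨Or.inr h, hx⟩
        rw [h1, h2]; exact ih
      · have h1 : A ∪ insert a T = insert a (A ∪ T) := by
          ext x; simp only [Finset.mem_union, Finset.mem_insert]; tauto
        have h2 : (insert a T) \ A = insert a (T \ A) := by
          ext x; simp only [Finset.mem_sdiff, Finset.mem_insert]
          constructor
          · rintro ⟨h | h, hx⟩
            · exact Or.inl h
            · exact Or.inr ⟨h, hx⟩
          · rintro (h | ⟨h, hx⟩)
            · exact ⟨Or.inl h, h ▸ haA⟩
            · exact ⟨Or.inr h, hx⟩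
        have hnot : a ∉ T \ A := fun h => haT (Finset.mem_sdiff.mp h).1
        rw [h1, h2, Finset.sum_insert hnot]
        have hsub' := hsub (insert a A) (A ∪ T)
        have hun : insert a A ∪ (A ∪ T) = insert a (A ∪ T) := by
          ext x; simp only [Finset.mem_union, Finset.mem_insert]; tauto
        have hint : A ⊆ insert a A ∩ (A ∪ T) := by
          intro x hx
          simp only [Finset.mem_inter, Finset.mem_insert, Finset.mem_union]
          exact ⟨Or.inr hx, Or.inl hx⟩
        have hm := hmono A _ hint
        rw [hun] at hsub'
        linarith
  -- one step of greedy
  have step : ∀ i < k, f Sopt - f (S (i+1)) ≤ (1 - 1/(k:ℝ)) * (f Sopt - f (S i)) := by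
    intro i hi
    obtain ⟨e, he, hSe, hmax⟩ := hgreedy i hi
    have hg0 : 0 ≤ f (S (i+1)) - f (S i) := by
      have := hmono (S i) (S (i+1)) (by rw [hSe]; exact Finset.subset_insert _ _)
      linarith
    have h1 : f Sopt ≤ f (S i ∪ Sopt) := hmono _ _ Finset.subset_union_right
    have h2 := key (S i) Sopt
    have h3 : ∑ e' ∈ Sopt \ S i, (f (insert e' (S i)) - f (S i))
        ≤ (Sopt \ S i).card * (f (S (i+1)) - f (S i)) := by
      calc ∑ e' ∈ Sopt \ S i, (f (insert e' (S i)) - f (S i))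
          ≤ ∑ _e' ∈ Sopt \ S i, (f (S (i+1)) - f (S i)) := by
            apply Finset.sum_le_sum
            intro x hx
            have hx' : x ∉ S i := (Finset.mem_sdiff.mp hx).2
            have := hmax x hx'
            rw [hSe]
            linarith
        _ = (Sopt \ S i).card * (f (S (i+1)) - f (S i)) := by
            rw [Finset.sum_const, nsmul_eq_mul]
    have hcard' : ((Sopt \ S i).card : ℝ) ≤ (k:ℝ) := by
      exact_mod_cast le_trans (Finset.card_le_card Finset.sdiff_subset) hcard
    have h4 : f Sopt ≤ f (S i) + (k:ℝ) * (f (S (i+1)) - f (S i)) := by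
      have := mul_le_mul_of_nonneg_right hcard' hg0
      linarith
    have h5 : (f Sopt - f (S i)) / (k:ℝ) ≤ f (S (i+1)) - f (S i) := by
      rw [div_le_iff₀ hkpos]
      nlinarith
    have hexp : (1 - 1/(k:ℝ)) * (f Sopt - f (S i))
        = (f Sopt - f (S i)) - (f Sopt - f (S i)) / (k:ℝ) := by
      field_simp
    linarith
  -- induction
  have main : ∀ i ≤ k, f Sopt - f (S i) ≤ (1 - 1/(k:ℝ))^i * f Sopt := by
    intro i
    induction i with
    | zero => intro _; simp [hS0, hf0]
    | succ n ih =>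
      intro hn
      have hn' : n < k := hn
      calc f Sopt - f (S (n+1)) ≤ (1 - 1/(k:ℝ)) * (f Sopt - f (S n)) := step n hn'
        _ ≤ (1 - 1/(k:ℝ)) * ((1 - 1/(k:ℝ))^n * f Sopt) :=
            mul_le_mul_of_nonneg_left (ih (le_of_lt hn')) hc0
        _ = (1 - 1/(k:ℝ))^(n+1) * f Sopt := by ring
  have hmain := main k le_rfl
  have hfopt0 : 0 ≤ f Sopt := by
    have := hmono ∅ Sopt (Finset.empty_subset _)
    linarith
  constructor
  · nlinarith [hmain]
  · have hce : (1 - 1/(k:ℝ))^k ≤ Real.exp (-1) := by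
      have h1 : 1 - 1/(k:ℝ) ≤ Real.exp (-(1/(k:ℝ))) := by
        have := Real.add_one_le_exp (-(1/(k:ℝ)))
        linarith
      calc (1 - 1/(k:ℝ))^k ≤ (Real.exp (-(1/(k:ℝ))))^k := pow_le_pow_left₀ hc0 h1 k
        _ = Real.exp ((k:ℝ) * (-(1/(k:ℝ)))) := by rw [← Real.exp_nat_mul]
        _ = Real.exp (-1) := by
            congr 1
            field_simp
    have := mul_le_mul_of_nonneg_right hce hfopt0
    nlinarith
end

section
/- If S* is an optimal solution of size k for maximizing a normalized monotone submodular f, and Sᵢ is the greedy solution after i steps with marginal gains δᵢ₊₁ = f(Sᵢ₊₁) - f(Sᵢ), then f(S*) - f(Sᵢ) ≤ k·δᵢ₊₁; consequently f(S*) - f(Sᵢ₊₁) ≤ (1 - 1/k)(f(S*) - f(Sᵢ)). -/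
private lemma sub_sum_bound {E : Type*} [Fintype E] [DecidableEq E] (f : Finset E → ℝ)
    (hmono : ∀ A B : Finset E, A ⊆ B → f A ≤ f B)
    (hsub : ∀ A B : Finset E, f A + f B ≥ f (A ∪ B) + f (A ∩ B))
    (Si : Finset E) :
    ∀ T : Finset E, f (T ∪ Si) ≤ f Si + ∑ x ∈ T, (f (insert x Si) - f Si) := by
  intro T
  induction T using Finset.induction_on with
  | empty => simp
  | insert =>
    rename_i a T ha ih
    rw [Finset.sum_insert ha]
    have h1 := hsub (T ∪ Si) (insert a Si)
    have h2 : Si ⊆ (T ∪ Si) ∩ insert a Si := by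
      intro x hx
      simp [hx, Finset.mem_insert, Finset.mem_union]
    have h3 := hmono _ _ h2
    have h4 : (T ∪ Si) ∪ insert a Si = insert a T ∪ Si := by
      ext x; simp [Finset.mem_insert, Finset.mem_union]
    rw [h4] at h1
    linarith

/-- Greedy recursion for submodular maximization: with `δ = f(Sᵢ₊₁) - f(Sᵢ)` the
marginal gain of the greedily chosen element, `f(S*) - f(Sᵢ) ≤ k·δ` and hence
`f(S*) - f(Sᵢ₊₁) ≤ (1 - 1/k)(f(S*) - f(Sᵢ))`. -/
theorem greedy_gap_recursion
    {E : Type*} [Fintype E] [DecidableEq E] (f : Finset E → ℝ)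
    (hf0 : f ∅ = 0)
    (hmono : ∀ A B : Finset E, A ⊆ B → f A ≤ f B)
    (hsub : ∀ A B : Finset E, f A + f B ≥ f (A ∪ B) + f (A ∩ B))
    (k : ℕ) (hk : 0 < k)
    (Sopt : Finset E) (hcard : Sopt.card ≤ k)
    (hopt : ∀ T : Finset E, T.card ≤ k → f T ≤ f Sopt)
    (Si : Finset E) (e : E) (he : e ∉ Si)
    (hchoice : ∀ e' ∉ Si, f (insert e' Si) ≤ f (insert e Si)) :
    f Sopt - f Si ≤ (k : ℝ) * (f (insert e Si) - f Si) ∧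
    f Sopt - f (insert e Si) ≤ (1 - 1 / (k : ℝ)) * (f Sopt - f Si) := by
  set δ := f (insert e Si) - f Si with hδ
  have hδ0 : 0 ≤ δ := by
    have := hmono Si (insert e Si) (Finset.subset_insert _ _)
    linarith
  have hterm : ∀ x ∈ Sopt, f (insert x Si) - f Si ≤ δ := by
    intro x _
    by_cases hx : x ∈ Si
    · rw [Finset.insert_eq_self.mpr hx]; linarith
    · have := hchoice x hx; linarith
  have hsum : ∑ x ∈ Sopt, (f (insert x Si) - f Si) ≤ (Sopt.card : ℝ) * δ := by
    calc ∑ x ∈ Sopt, (f (insert x Si) - f Si) ≤ ∑ _x ∈ Sopt, δ :=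
          Finset.sum_le_sum hterm
      _ = (Sopt.card : ℝ) * δ := by rw [Finset.sum_const, nsmul_eq_mul]
  have h1 : f Sopt ≤ f (Sopt ∪ Si) := hmono _ _ Finset.subset_union_left
  have h2 := sub_sum_bound f hmono hsub Si Sopt
  have hck : (Sopt.card : ℝ) ≤ (k : ℝ) := by exact_mod_cast hcard
  have main : f Sopt - f Si ≤ (k : ℝ) * δ := by
    nlinarith [mul_le_mul_of_nonneg_right hck hδ0]
  refine ⟨main, ?_⟩
  have hkpos : (0 : ℝ) < k := by exact_mod_cast hk
  have : f Sopt - f Si ≤ (k : ℝ) * δ := main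
  have hdiv : (f Sopt - f Si) / k ≤ δ := by
    rw [div_le_iff₀ hkpos]; linarith [main]
  have : (1 - 1 / (k : ℝ)) * (f Sopt - f Si) = (f Sopt - f Si) - (f Sopt - f Si) / k := by
    field_simp
  rw [this]
  have : f Sopt - f (insert e Si) = (f Sopt - f Si) - δ := by rw [hδ]; ring
  linarith
end
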